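/- arXiv:1004.1432 — 6 statements merged into one kernel-verified Lean document; each statement's English description precedes it below -/
import Mathlib

section
/- Let d ≥ 1, R > 0, γ > 1, and let D = {q ∈ ℝ^d : |q| < R}. Suppose M : ℝ^d → ℝ and w : ℝ^d → ℝ are measurable functions and c₁, c₂, c₃, c₄ > 0 are constants such that for all q ∈ D: c₁ · (R − |q|)^γ ≤ M(q) ≤ c₂ · (R − |q|)^γ and c₃ ≤ (R − |q|) · w(q) ≤ c₄. Then for every real constant C₀, the function q ↦ (1 + (C₀ + log M(q))² + w(q)²) · M(q) is Lebesgue-integrable over D. (This is the integrability statement ∫_D [1 + U(|q|²/2)² + U′(|q|²/2)²] M(q) dq < ∞ for a Maxwellian M = Z⁻¹ e^{−U(|q|²/2)} satisfying the growth conditions with exponent γ > 1, where U(|q|²/2) = −log M(q) − log Z and w(q) = U′(|q|²/2).) -/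
open MeasureTheory Set Metric

lemma aux_radial (d : ℕ) (hd : 1 ≤ d) (R s : ℝ) (hR : 0 < R) (hs : -1 < s) :
    IntegrableOn (fun q : EuclideanSpace ℝ (Fin d) => (R - ‖q‖) ^ s)
      (Metric.ball (0 : EuclideanSpace ℝ (Fin d)) R) volume := by
  haveI : Nontrivial (EuclideanSpace ℝ (Fin d)) := by
    refine Module.nontrivial_of_finrank_pos (R := ℝ) (M := EuclideanSpace ℝ (Fin d)) ?_
    rw [finrank_euclideanSpace_fin]; omega
  set E := EuclideanSpace ℝ (Fin d)
  set G : ℝ → ENNReal := fun r =>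
    Set.indicator (Set.Iio R) (fun r => ENNReal.ofReal (Real.exp (Real.log (R - r) * s))) r
    with hGdef
  have hGmeas : Measurable G :=
    (((Real.measurable_log.comp (measurable_const.sub measurable_id)).mul_const
      s).exp.ennreal_ofReal).indicator measurableSet_Iio
  have hGeq : ∀ r : ℝ, r < R → G r = ENNReal.ofReal ((R - r) ^ s) := by
    intro r hr
    rw [hGdef]
    simp only [Set.indicator_of_mem (Set.mem_Iio.mpr hr)]
    rw [Real.rpow_def_of_pos (by linarith)]
  have hdim : Module.finrank ℝ E = d := finrank_euclideanSpace_fin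
  -- key finiteness
  have hIoo : ∫⁻ r in Set.Ioo (0:ℝ) R, ENNReal.ofReal ((R - r) ^ s) ∂volume < ⊤ := by
    have h1 : IntervalIntegrable (fun x : ℝ => x ^ s) volume 0 R :=
      intervalIntegral.intervalIntegrable_rpow' hs
    have h2 := (h1.comp_sub_left R).symm
    simp only [sub_zero, sub_self] at h2
    have h3 : IntegrableOn (fun x : ℝ => (R - x) ^ s) (Set.Ioo 0 R) volume :=
      (intervalIntegrable_iff_integrableOn_Ioo_of_le hR.le).mp h2
    have h4 := h3.2
    refine lt_of_le_of_lt ?_ h4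
    refine lintegral_mono fun r => ?_
    exact Real.ofReal_le_enorm _
  have key : ∫⁻ q in Metric.ball (0 : E) R, ENNReal.ofReal ((R - ‖q‖) ^ s) ∂volume < ⊤ := by
    have step1 : ∫⁻ q in Metric.ball (0 : E) R, ENNReal.ofReal ((R - ‖q‖) ^ s) ∂volume
        = ∫⁻ q : E, G ‖q‖ ∂volume := by
      rw [← lintegral_indicator measurableSet_ball]
      refine lintegral_congr fun q => ?_
      by_cases hq : q ∈ Metric.ball (0 : E) R
      · rw [Set.indicator_of_mem hq, hGeq _ (mem_ball_zero_iff.mp hq)]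
      · rw [Set.indicator_of_notMem hq, hGdef]
        have : ¬ (‖q‖ < R) := fun h => hq (mem_ball_zero_iff.mpr h)
        simp only [Set.indicator_of_notMem (fun h => this (Set.mem_Iio.mp h))]
    have step2 : ∫⁻ q : E, G ‖q‖ ∂volume
        = ∫⁻ p : Metric.sphere (0:E) 1 × Set.Ioi (0:ℝ), G p.2
            ∂((volume : Measure E).toSphere.prod (Measure.volumeIoiPow (Module.finrank ℝ E - 1))) := by
      conv_lhs => rw [← restrict_compl_singleton (μ := (volume : Measure E)) (0 : E)]
      rw [← lintegral_subtype_comap (measurableSet_singleton (0:E)).compl (fun q => G ‖q‖),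
        ← (volume : Measure E).measurePreserving_homeomorphUnitSphereProd.lintegral_comp_emb
          (Homeomorph.measurableEmbedding _) (fun p : Metric.sphere (0:E) 1 × Set.Ioi (0:ℝ) => G ↑p.2)]
      exact lintegral_congr fun x => by
        rw [homeomorphUnitSphereProd_apply_snd_coe]
    have step3 : ∫⁻ p : Metric.sphere (0:E) 1 × Set.Ioi (0:ℝ), G p.2
            ∂((volume : Measure E).toSphere.prod (Measure.volumeIoiPow (Module.finrank ℝ E - 1)))
        = (volume : Measure E).toSphere Set.univ
            * ∫⁻ r : Set.Ioi (0:ℝ), G r ∂(Measure.volumeIoiPow (d - 1)) := by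
      rw [hdim, lintegral_prod (fun p : Metric.sphere (0:E) 1 × Set.Ioi (0:ℝ) => G ↑p.2) ((hGmeas.comp
        (measurable_subtype_coe.comp measurable_snd)).aemeasurable)]
      exact (lintegral_const (∫⁻ r : Set.Ioi (0:ℝ), G ↑r
        ∂(Measure.volumeIoiPow (d - 1)))).trans (mul_comm _ _)
    have step4 : ∫⁻ r : Set.Ioi (0:ℝ), G r ∂(Measure.volumeIoiPow (d - 1))
        = ∫⁻ r in Set.Ioi (0:ℝ), ENNReal.ofReal (r ^ (d-1)) * G r ∂volume := by
      rw [Measure.volumeIoiPow,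
        lintegral_withDensity_eq_lintegral_mul _
          ((measurable_subtype_coe.pow_const _).ennreal_ofReal)
          (show Measurable fun r : Set.Ioi (0:ℝ) => G ↑r from hGmeas.comp measurable_subtype_coe),
        ← lintegral_subtype_comap measurableSet_Ioi
          (fun r => ENNReal.ofReal (r ^ (d-1)) * G r)]
      exact lintegral_congr fun x => rfl
    have step5 : ∫⁻ r in Set.Ioi (0:ℝ), ENNReal.ofReal (r ^ (d-1)) * G r ∂volume < ⊤ := by
      have hbd : ∀ r ∈ Set.Ioo (0:ℝ) R,
          ENNReal.ofReal (r ^ (d-1)) * G r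
            ≤ ENNReal.ofReal (R ^ (d-1)) * ENNReal.ofReal ((R - r) ^ s) := by
        intro r hr
        rw [hGeq _ hr.2]
        exact mul_le_mul_left (ENNReal.ofReal_le_ofReal
          (pow_le_pow_left₀ hr.1.le hr.2.le _)) _
      have hvanish : (fun r => ENNReal.ofReal (r ^ (d-1)) * G r)
          = Set.indicator (Set.Iio R) (fun r => ENNReal.ofReal (r ^ (d-1)) * G r) := by
        funext r
        by_cases hr : r ∈ Set.Iio R
        · rw [Set.indicator_of_mem hr]
        · rw [Set.indicator_of_notMem hr, hGdef]
          simp [Set.indicator_of_notMem hr]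
      calc ∫⁻ r in Set.Ioi (0:ℝ), ENNReal.ofReal (r ^ (d-1)) * G r ∂volume
          = ∫⁻ r in Set.Iio R ∩ Set.Ioi (0:ℝ), ENNReal.ofReal (r ^ (d-1)) * G r ∂volume := by
            conv_lhs => rw [hvanish]
            rw [lintegral_indicator measurableSet_Iio,
              Measure.restrict_restrict measurableSet_Iio]
        _ = ∫⁻ r in Set.Ioo (0:ℝ) R, ENNReal.ofReal (r ^ (d-1)) * G r ∂volume := by
            rw [Set.Iio_inter_Ioi]
        _ ≤ ∫⁻ r in Set.Ioo (0:ℝ) R,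
              ENNReal.ofReal (R ^ (d-1)) * ENNReal.ofReal ((R - r) ^ s) ∂volume := by
            refine lintegral_mono_ae ?_
            filter_upwards [ae_restrict_mem measurableSet_Ioo] with r hr
            exact hbd r hr
        _ = ENNReal.ofReal (R ^ (d-1))
              * ∫⁻ r in Set.Ioo (0:ℝ) R, ENNReal.ofReal ((R - r) ^ s) ∂volume := by
            rw [lintegral_const_mul' _ _ ENNReal.ofReal_ne_top]
        _ < ⊤ := ENNReal.mul_lt_top ENNReal.ofReal_lt_top hIoo
    rw [step1, step2, step3, step4]
    exact ENNReal.mul_lt_top (measure_lt_top _ _) step5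
  -- assemble
  have hpos : 0 ≤ᵐ[volume.restrict (Metric.ball (0:E) R)] fun q : E => (R - ‖q‖) ^ s := by
    filter_upwards [ae_restrict_mem measurableSet_ball] with q hq
    have := mem_ball_zero_iff.mp hq
    exact Real.rpow_nonneg (by linarith) s
  constructor
  · refine ContinuousOn.aestronglyMeasurable ?_ measurableSet_ball
    refine ContinuousOn.rpow_const ((continuous_const.sub continuous_norm).continuousOn)
      fun q hq => Or.inl ?_
    have := mem_ball_zero_iff.mp hq
    have hq' : 0 < R - ‖q‖ := by linarith
    exact hq'.ne'
  · rw [hasFiniteIntegral_iff_ofReal hpos]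
    exact key

set_option maxHeartbeats 1000000 in
theorem stmt2 (d : ℕ) (hd : 1 ≤ d) (R γ : ℝ) (hR : 0 < R) (hγ : 1 < γ)
    (M w : EuclideanSpace ℝ (Fin d) → ℝ) (hM : Measurable M) (hw : Measurable w)
    (c₁ c₂ c₃ c₄ : ℝ) (hc₁ : 0 < c₁) (hc₂ : 0 < c₂) (hc₃ : 0 < c₃) (hc₄ : 0 < c₄)
    (hgrowth : ∀ q ∈ Metric.ball (0 : EuclideanSpace ℝ (Fin d)) R,
      c₁ * (R - ‖q‖) ^ γ ≤ M q ∧ M q ≤ c₂ * (R - ‖q‖) ^ γ ∧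
      c₃ ≤ (R - ‖q‖) * w q ∧ (R - ‖q‖) * w q ≤ c₄)
    (C₀ : ℝ) :
    IntegrableOn
      (fun q => (1 + (C₀ + Real.log (M q)) ^ 2 + w q ^ 2) * M q)
      (Metric.ball (0 : EuclideanSpace ℝ (Fin d)) R) volume := by
  have hγ0 : (0:ℝ) < γ := by linarith
  set ε : ℝ := γ / 4 with hε
  have hεpos : 0 < ε := by positivity
  set A : ℝ := |C₀| + |Real.log c₁| + |Real.log c₂| with hA
  have hA0 : 0 ≤ A := by positivity
  set Rm : ℝ := max R 1 with hRm
  have hRm1 : (1:ℝ) ≤ Rm := le_max_right R 1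
  have hRmR : R ≤ Rm := le_max_left R 1
  set B₁ : ℝ := 1 + (A + γ/ε)^2 with hB₁
  set B₂ : ℝ := (1 + (A + γ * Real.log Rm)^2) * Rm ^ γ with hB₂
  have hB₁0 : 0 ≤ B₁ := by positivity
  have hB₂0 : 0 ≤ B₂ := by
    have : (0:ℝ) ≤ Rm ^ γ := Real.rpow_nonneg (by linarith) γ
    positivity
  set Bc : ℝ := B₁ + B₂ with hBc
  -- uniform bound on the logarithmic part
  have hbound : ∀ t : ℝ, 0 < t → t ≤ R →
      (1 + (A + γ * |Real.log t|)^2) * t ^ γ ≤ Bc := by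
    intro t ht htR
    rcases le_or_gt t 1 with h1 | h1
    · -- t ≤ 1
      have hlt : |Real.log t| ≤ t ^ (-ε) / ε := by
        rw [abs_of_nonpos (Real.log_nonpos ht.le h1)]
        have h := Real.log_le_rpow_div (inv_nonneg.mpr ht.le) hεpos
        rw [Real.log_inv, Real.inv_rpow ht.le, ← Real.rpow_neg ht.le] at h
        linarith
      have ht1 : (1:ℝ) ≤ t ^ (-ε) :=
        Real.one_le_rpow_of_pos_of_le_one_of_nonpos ht h1 (by linarith)
      have h2 : A + γ * |Real.log t| ≤ (A + γ/ε) * t ^ (-ε) := by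
        have hA' : A ≤ A * t ^ (-ε) := le_mul_of_one_le_right hA0 ht1
        have hg : γ * |Real.log t| ≤ γ * (t ^ (-ε) / ε) :=
          mul_le_mul_of_nonneg_left hlt hγ0.le
        have : γ * (t ^ (-ε) / ε) = (γ/ε) * t ^ (-ε) := by ring
        nlinarith
      have hs1 : (A + γ * |Real.log t|)^2 ≤ (A + γ/ε)^2 * (t ^ (-ε))^2 := by
        have h4 := pow_le_pow_left₀ (by positivity) h2 2
        calc (A + γ * |Real.log t|)^2 ≤ ((A + γ/ε) * t ^ (-ε))^2 := h4
          _ = (A + γ/ε)^2 * (t ^ (-ε))^2 := by ring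
      have hs2 : (t ^ (-ε))^2 * t ^ γ = t ^ (γ - 2*ε) := by
        rw [sq, ← Real.rpow_add ht, ← Real.rpow_add ht]
        congr 1; ring
      have hle1 : t ^ γ ≤ 1 := Real.rpow_le_one ht.le h1 hγ0.le
      have hle2 : t ^ (γ - 2*ε) ≤ 1 := by
        refine Real.rpow_le_one ht.le h1 ?_
        rw [hε]; linarith
      have h0 : 0 ≤ t ^ γ := Real.rpow_nonneg ht.le γ
      have h5 : (A + γ * |Real.log t|)^2 * t ^ γ
          ≤ (A + γ/ε)^2 * (t ^ (-ε))^2 * t ^ γ :=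
        mul_le_mul_of_nonneg_right hs1 h0
      have h6 : (A + γ/ε)^2 * ((t ^ (-ε))^2 * t ^ γ) ≤ (A + γ/ε)^2 * 1 := by
        rw [hs2]
        exact mul_le_mul_of_nonneg_left hle2 (sq_nonneg _)
      have goal1 : (1 + (A + γ * |Real.log t|)^2) * t ^ γ ≤ B₁ := by
        rw [hB₁]; nlinarith
      linarith
    · -- 1 < t
      have hlog0 : 0 ≤ Real.log t := Real.log_nonneg h1.le
      have hlog : Real.log t ≤ Real.log Rm :=
        Real.log_le_log ht (le_trans htR hRmR)
      have htg : t ^ γ ≤ Rm ^ γ :=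
        Real.rpow_le_rpow ht.le (le_trans htR hRmR) hγ0.le
      have h0 : 0 ≤ t ^ γ := Real.rpow_nonneg ht.le γ
      have habs : |Real.log t| = Real.log t := abs_of_nonneg hlog0
      have hX : A + γ * |Real.log t| ≤ A + γ * Real.log Rm := by
        rw [habs]
        nlinarith
      have hXsq : (A + γ * |Real.log t|)^2 ≤ (A + γ * Real.log Rm)^2 := by
        refine pow_le_pow_left₀ (by positivity) hX 2
      have goal2 : (1 + (A + γ * |Real.log t|)^2) * t ^ γ ≤ B₂ := by
        rw [hB₂]
        refine mul_le_mul (by linarith) htg h0 (by positivity)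
      linarith
  -- measurability of the integrand
  have hmeasf : AEStronglyMeasurable
      (fun q : EuclideanSpace ℝ (Fin d) =>
        (1 + (C₀ + Real.log (M q)) ^ 2 + w q ^ 2) * M q)
      (volume.restrict (Metric.ball (0 : EuclideanSpace ℝ (Fin d)) R)) := by
    refine Measurable.aestronglyMeasurable ?_
    exact (((measurable_const.add
      ((measurable_const.add (Real.measurable_log.comp hM)).pow_const 2)).add
        (hw.pow_const 2)).mul hM)
  -- dominating function
  have hdom : IntegrableOn
      (fun q : EuclideanSpace ℝ (Fin d) => c₂ * Bc + c₂ * c₄^2 * (R - ‖q‖) ^ (γ - 2))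
      (Metric.ball (0 : EuclideanSpace ℝ (Fin d)) R) volume := by
    refine Integrable.add ?_ ?_
    · exact (integrableOn_const_iff (by finiteness)).mpr (Or.inr measure_ball_lt_top)
    · exact (aux_radial d hd R (γ-2) hR (by linarith)).const_mul (c₂ * c₄^2)
  refine hdom.mono' hmeasf ?_
  filter_upwards [ae_restrict_mem measurableSet_ball] with q hq
  -- pointwise estimate
  set t : ℝ := R - ‖q‖ with htdef
  have hqn : ‖q‖ < R := mem_ball_zero_iff.mp hq
  have ht : 0 < t := by rw [htdef]; linarith
  have htR : t ≤ R := by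
    have := norm_nonneg q
    rw [htdef]; linarith
  obtain ⟨hg1, hg2, hg3, hg4⟩ := hgrowth q hq
  have htγ : 0 < t ^ γ := Real.rpow_pos_of_pos ht γ
  have hMpos : 0 < M q := lt_of_lt_of_le (by positivity) hg1
  -- logarithm bounds
  have hlogM_up : Real.log (M q) ≤ Real.log c₂ + γ * Real.log t := by
    have h := Real.log_le_log hMpos hg2
    rwa [Real.log_mul hc₂.ne' htγ.ne', Real.log_rpow ht] at h
  have hlogM_lo : Real.log c₁ + γ * Real.log t ≤ Real.log (M q) := by
    have h := Real.log_le_log (by positivity) hg1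
    rwa [Real.log_mul hc₁.ne' htγ.ne', Real.log_rpow ht] at h
  have hlt1 : γ * Real.log t ≤ γ * |Real.log t| :=
    mul_le_mul_of_nonneg_left (le_abs_self _) hγ0.le
  have hlt2 : -(γ * |Real.log t|) ≤ γ * Real.log t := by
    have := mul_le_mul_of_nonneg_left (neg_abs_le (Real.log t)) hγ0.le
    linarith
  have habs : |C₀ + Real.log (M q)| ≤ A + γ * |Real.log t| := by
    rw [abs_le, hA]
    constructor
    · have h1 := neg_abs_le C₀
      have h2 := neg_abs_le (Real.log c₁)
      have h3 := abs_nonneg (Real.log c₂)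
      linarith
    · have h1 := le_abs_self C₀
      have h2 := le_abs_self (Real.log c₂)
      have h3 := abs_nonneg (Real.log c₁)
      linarith
  have hLsq : (C₀ + Real.log (M q))^2 ≤ (A + γ * |Real.log t|)^2 := by
    have h := pow_le_pow_left₀ (abs_nonneg _) habs 2
    rwa [sq_abs] at h
  -- part 1
  have part1 : (1 + (C₀ + Real.log (M q))^2) * M q ≤ c₂ * Bc := by
    calc (1 + (C₀ + Real.log (M q))^2) * M q
        ≤ (1 + (A + γ * |Real.log t|)^2) * (c₂ * t ^ γ) :=
          mul_le_mul (by linarith) hg2 hMpos.le (by positivity)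
      _ = c₂ * ((1 + (A + γ * |Real.log t|)^2) * t ^ γ) := by ring
      _ ≤ c₂ * Bc := mul_le_mul_of_nonneg_left (hbound t ht htR) hc₂.le
  -- part 2
  have htw0 : 0 ≤ t * w q := le_trans hc₃.le hg3
  have part2 : w q^2 * M q ≤ c₂ * c₄^2 * t ^ (γ - 2) := by
    have e : t ^ γ = t ^ (γ - 2) * t ^ 2 := by
      rw [← Real.rpow_natCast t 2, ← Real.rpow_add ht]
      norm_num
    have hγ2 : 0 ≤ t ^ (γ - 2) := Real.rpow_nonneg ht.le _
    have hsq : (t * w q)^2 ≤ c₄^2 := pow_le_pow_left₀ htw0 hg4 2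
    calc w q^2 * M q ≤ w q^2 * (c₂ * t ^ γ) :=
          mul_le_mul_of_nonneg_left hg2 (sq_nonneg _)
      _ = c₂ * ((t * w q)^2 * t ^ (γ - 2)) := by rw [e]; ring
      _ ≤ c₂ * (c₄^2 * t ^ (γ - 2)) :=
          mul_le_mul_of_nonneg_left (mul_le_mul_of_nonneg_right hsq hγ2) hc₂.le
      _ = c₂ * c₄^2 * t ^ (γ - 2) := by ring
  have hf0 : 0 ≤ (1 + (C₀ + Real.log (M q)) ^ 2 + w q ^ 2) * M q := by positivity
  rw [Real.norm_eq_abs, abs_of_nonneg hf0]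
  nlinarith [part1, part2, hMpos, sq_nonneg (w q)]
end

section
/- Let d ≥ 1, K ≥ 1, let b₁, …, b_K > 0, and let D = {q = (q₁, …, q_K) : qᵢ ∈ ℝ^d, |qᵢ| < √bᵢ for each i} ⊆ (ℝ^d)^K. Let M : (ℝ^d)^K → ℝ be continuously differentiable with support contained in the closure of D, let φ : (ℝ^d)^K → ℝ be continuously differentiable, and for each i = 1, …, K let uᵢ : ℝ → ℝ be a function such that for every q ∈ D the gradient of M with respect to the i-th block variable satisfies ∇_{qᵢ} M(q) = − uᵢ(|qᵢ|²/2) · M(q) · qᵢ. Let B : ℝ^d → ℝ^d be a linear map with trace B = 0. Then ∫_D M(q) · Σ_{i=1}^K ⟨B qᵢ, ∇_{qᵢ} φ(q)⟩ dq = ∫_D M(q) · φ(q) · Σ_{i=1}^K uᵢ(|qᵢ|²/2) · ⟨qᵢ, B qᵢ⟩ dq, where the integrals are with respect to Lebesgue measure on (ℝ^d)^K. (This is the integration-by-parts formula of Lemma 3.1 in the smooth case: ∫_D M Σᵢ (Bqᵢ)·∇_{qᵢ}φ̂ dq = ∫_D M φ̂ Σᵢ qᵢ qᵢᵀ Uᵢ′(|qᵢ|²/2)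 : B dq for trace-free B.) -/
open MeasureTheory RealInnerProductSpace

instance pihaarStmt4 (d K : ℕ) :
    (volume : Measure (Fin K → EuclideanSpace ℝ (Fin d))).IsAddHaarMeasure := ⟨⟩

lemma ibp_aux_stmt4 {E : Type*} [NormedAddCommGroup E] [NormedSpace ℝ E] [MeasurableSpace E]
    [FiniteDimensional ℝ E] [BorelSpace E] (μ : Measure E) [μ.IsAddHaarMeasure]
    (F : E → ℝ) (hF : ContDiff ℝ 1 F) (hFc : HasCompactSupport F) (ℓ : E →L[ℝ] ℝ) (v : E) :
    ∫ x, fderiv ℝ F x v * ℓ x ∂μ = -(ℓ v) * ∫ x, F x ∂μ := by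
  obtain ⟨C, hC⟩ := ContDiff.lipschitzWith_of_hasCompactSupport hFc hF one_ne_zero
  have key := LipschitzWith.integral_lineDeriv_mul_eq (μ := μ) ℓ.lipschitz hC hFc (-v)
  have h1 : ∀ x, lineDeriv ℝ (⇑ℓ) x (-v) = -(ℓ v) := by
    intro x
    rw [ℓ.differentiableAt.lineDeriv_eq_fderiv, ℓ.fderiv]; simp
  have h2 : ∀ x, lineDeriv ℝ F x (- -v) = fderiv ℝ F x v := by
    intro x
    rw [((hF.differentiable one_ne_zero) x).lineDeriv_eq_fderiv]; simp
  simp only [h1, h2] at key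
  rw [← key, integral_const_mul]

/-- The continuous linear inclusion of the `i`-th block. -/
noncomputable def singStmt4 (d K : ℕ) (i : Fin K) :
    EuclideanSpace ℝ (Fin d) →L[ℝ] (Fin K → EuclideanSpace ℝ (Fin d)) :=
  ContinuousLinearMap.pi (Pi.single i (ContinuousLinearMap.id ℝ (EuclideanSpace ℝ (Fin d))))

lemma grad_partial_stmt4 {d K : ℕ} (g : (Fin K → EuclideanSpace ℝ (Fin d)) → ℝ)
    (hg : Differentiable ℝ g)
    (q : Fin K → EuclideanSpace ℝ (Fin d)) (i : Fin K) (v : EuclideanSpace ℝ (Fin d)) :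
    ⟪gradient (fun y => g (Function.update q i y)) (q i), v⟫
      = fderiv ℝ g q (singStmt4 d K i v) := by
  have h0 : HasFDerivAt (Function.update q i) (singStmt4 d K i) (q i) :=
    hasFDerivAt_update q (q i)
  have h1 := ((hg (Function.update q i (q i))).hasFDerivAt).comp (q i) h0
  rw [Function.update_eq_self] at h1
  have h2 := h1.hasGradientAt.gradient
  rw [show (fun y => g (Function.update q i y)) = g ∘ Function.update q i from rfl, h2,
    InnerProductSpace.toDual_symm_apply]
  rfl

lemma trace_eq_stmt4 (d : ℕ) (B : EuclideanSpace ℝ (Fin d) →ₗ[ℝ] EuclideanSpace ℝ (Fin d)) :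
    LinearMap.trace ℝ _ B = ∑ j, B (EuclideanSpace.single j 1) j := by
  rw [LinearMap.trace_eq_matrix_trace ℝ (EuclideanSpace.basisFun (Fin d) ℝ).toBasis B,
    Matrix.trace]
  simp [Matrix.diag, LinearMap.toMatrix_apply]

lemma eucl_decomp_stmt4 {d : ℕ} (w : EuclideanSpace ℝ (Fin d)) :
    w = ∑ j, w j • EuclideanSpace.single j (1:ℝ) := by
  have h := (EuclideanSpace.basisFun (Fin d) ℝ).toBasis.sum_repr w
  simpa using h.symm

set_option maxHeartbeats 1000000 in
theorem stmt4 (d K : ℕ) (hd : 1 ≤ d) (hK : 1 ≤ K)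
    (bv : Fin K → ℝ) (hbv : ∀ i, 0 < bv i)
    (D : Set (Fin K → EuclideanSpace ℝ (Fin d)))
    (hD : D = Set.univ.pi fun i => Metric.ball 0 (Real.sqrt (bv i)))
    (M φ : (Fin K → EuclideanSpace ℝ (Fin d)) → ℝ)
    (hM : ContDiff ℝ 1 M) (hφ : ContDiff ℝ 1 φ)
    (hsupp : tsupport M ⊆ closure D)
    (u : Fin K → ℝ → ℝ)
    (hu : ∀ q ∈ D, ∀ i : Fin K,
      gradient (fun y => M (Function.update q i y)) (q i)
        = (-(u i (‖q i‖ ^ 2 / 2) * M q)) • q i)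
    (B : EuclideanSpace ℝ (Fin d) →ₗ[ℝ] EuclideanSpace ℝ (Fin d))
    (hB : LinearMap.trace ℝ (EuclideanSpace ℝ (Fin d)) B = 0) :
    ∫ q in D, M q * ∑ i : Fin K,
        ⟪B (q i), gradient (fun y => φ (Function.update q i y)) (q i)⟫
      = ∫ q in D, M q * φ q * ∑ i : Fin K,
          u i (‖q i‖ ^ 2 / 2) * ⟪q i, B (q i)⟫ := by
  classical
  let Bc : EuclideanSpace ℝ (Fin d) →L[ℝ] EuclideanSpace ℝ (Fin d) := B.toContinuousLinearMap
  set F : (Fin K → EuclideanSpace ℝ (Fin d)) → ℝ := fun q => M q * φ q with hFdef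
  have hF : ContDiff ℝ 1 F := hM.mul hφ
  have hMd : Differentiable ℝ M := hM.differentiable one_ne_zero
  have hφd : Differentiable ℝ φ := hφ.differentiable one_ne_zero
  -- compactness of closure D
  have hrpos : ∀ i, (0:ℝ) < Real.sqrt (bv i) := fun i => Real.sqrt_pos.2 (hbv i)
  have hclos : closure D = Set.univ.pi fun i => Metric.closedBall 0 (Real.sqrt (bv i)) := by
    rw [hD, closure_pi_set]
    exact Set.pi_congr rfl fun i _ => closure_ball 0 (hrpos i).ne'
  have hDcomp : IsCompact (closure D) := by
    rw [hclos]; exact isCompact_univ_pi fun i => isCompact_closedBall _ _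
  have hMc : HasCompactSupport M :=
    IsCompact.of_isClosed_subset hDcomp (isClosed_tsupport M) hsupp
  have hFc : HasCompactSupport F := hMc.mul_right
  have hDopen : IsOpen D := by
    rw [hD]; exact isOpen_set_pi Set.finite_univ fun i _ => Metric.isOpen_ball
  haveI : Nonempty (Fin d) := Fin.pos_iff_nonempty.mp hd
  -- boundary has measure zero
  have hnull : volume (closure D \ D) = 0 := by
    have hsub : closure D \ D ⊆ ⋃ i, Function.eval i ⁻¹'
        (Metric.sphere (0 : EuclideanSpace ℝ (Fin d)) (Real.sqrt (bv i))) := by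
      intro q hq
      obtain ⟨h1, h2⟩ := hq
      rw [hclos] at h1
      rw [hD] at h2
      simp only [Set.mem_pi, Set.mem_univ, forall_true_left, Metric.mem_closedBall] at h1
      rw [Set.mem_pi] at h2
      push_neg at h2
      obtain ⟨i, _, hi⟩ := h2
      refine Set.mem_iUnion.2 ⟨i, ?_⟩
      rw [Metric.mem_ball, not_lt] at hi
      simp only [Set.mem_preimage, Metric.mem_sphere, Function.eval]
      exact le_antisymm (h1 i) hi
    refine measure_mono_null hsub (measure_iUnion_null fun i => ?_)
    rw [volume_pi]
    exact Measure.pi_eval_preimage_null _ (Measure.addHaar_sphere (μ := volume) 0 (Real.sqrt (bv i)))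
  have haeD : ∀ᵐ q : Fin K → EuclideanSpace ℝ (Fin d), q ∉ closure D \ D := by
    rw [ae_iff]
    exact measure_mono_null (fun q hq => by simpa using hq) hnull
  -- surrogate integrands
  set L1 : (Fin K → EuclideanSpace ℝ (Fin d)) → ℝ := fun q => M q * ∑ i, fderiv ℝ φ q (singStmt4 d K i (Bc (q i))) with hL1
  set R1 : (Fin K → EuclideanSpace ℝ (Fin d)) → ℝ := fun q =>
    -(φ q * ∑ i, fderiv ℝ M q (singStmt4 d K i (Bc (q i)))) with hR1
  -- Step A : original LHS integrand equals L1 everywhere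
  have stepA : (fun q : Fin K → EuclideanSpace ℝ (Fin d) => M q * ∑ i : Fin K,
      ⟪B (q i), gradient (fun y => φ (Function.update q i y)) (q i)⟫) = L1 := by
    funext q
    simp only [hL1]
    congr 1
    refine Finset.sum_congr rfl fun i _ => ?_
    rw [real_inner_comm, grad_partial_stmt4 φ hφd q i (B (q i))]
    rfl
  -- Step B : original RHS integrand equals R1 on D
  have stepB : Set.EqOn (fun q : Fin K → EuclideanSpace ℝ (Fin d) => M q * φ q * ∑ i : Fin K,
      u i (‖q i‖ ^ 2 / 2) * ⟪q i, B (q i)⟫) R1 D := by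
    intro q hq
    simp only [hR1]
    have hterm : ∀ i : Fin K, fderiv ℝ M q (singStmt4 d K i (Bc (q i)))
        = -(u i (‖q i‖ ^ 2 / 2) * M q) * ⟪q i, B (q i)⟫ := by
      intro i
      rw [show (Bc (q i)) = B (q i) from rfl,
        ← grad_partial_stmt4 M hMd q i (B (q i)), hu q hq i, real_inner_smul_left]
    simp only [hterm]
    rw [Finset.mul_sum, Finset.mul_sum, ← Finset.sum_neg_distrib]
    refine Finset.sum_congr rfl fun i _ => by ring
  -- continuity facts
  have hcontfφ := hφ.continuous_fderiv one_ne_zero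
  have hcontfM := hM.continuous_fderiv one_ne_zero
  have hcontfF := hF.continuous_fderiv one_ne_zero
  have hw : ∀ i : Fin K, Continuous fun q : Fin K → EuclideanSpace ℝ (Fin d) => singStmt4 d K i (Bc (q i)) :=
    fun i => (singStmt4 d K i).continuous.comp (Bc.continuous.comp (continuous_apply i))
  have hcontL1 : Continuous L1 :=
    hM.continuous.mul (continuous_finset_sum _ fun i _ => hcontfφ.clm_apply (hw i))
  have hcontSR : Continuous fun q : Fin K → EuclideanSpace ℝ (Fin d) => ∑ i, fderiv ℝ M q (singStmt4 d K i (Bc (q i))) :=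
    continuous_finset_sum _ fun i _ => hcontfM.clm_apply (hw i)
  have hcontR1 : Continuous R1 := (hφ.continuous.mul hcontSR).neg
  -- compact supports
  have hL1c : HasCompactSupport L1 := hMc.mul_right
  have hSRc : HasCompactSupport fun q : Fin K → EuclideanSpace ℝ (Fin d) => ∑ i, fderiv ℝ M q (singStmt4 d K i (Bc (q i))) := by
    refine (HasCompactSupport.fderiv (𝕜 := ℝ) hMc).mono fun q hq => ?_
    simp only [Function.mem_support, ne_eq] at hq ⊢
    intro h0
    apply hq
    simp [h0]
  have hR1c : HasCompactSupport R1 := by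
    refine hSRc.mono fun q hq => ?_
    simp only [Function.mem_support, ne_eq, hR1] at hq ⊢
    intro h0
    apply hq
    simp [h0]
  have hintL1 : Integrable L1 := hcontL1.integrable_of_hasCompactSupport hL1c
  have hintR1 : Integrable R1 := hcontR1.integrable_of_hasCompactSupport hR1c
  -- off-D vanishing
  have hML1zero : ∀ q : Fin K → EuclideanSpace ℝ (Fin d), q ∉ closure D → L1 q = 0 := by
    intro q hq
    have : M q = 0 := image_eq_zero_of_notMem_tsupport fun h => hq (hsupp h)
    simp [hL1, this]
  have hMR1zero : ∀ q : Fin K → EuclideanSpace ℝ (Fin d), q ∉ closure D → R1 q = 0 := by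
    intro q hq
    have hM0 : fderiv ℝ M q = 0 := by
      by_contra h0
      exact hq (hsupp (support_fderiv_subset ℝ (Function.mem_support.2 h0)))
    simp [hR1, hM0]
  have haeL1 : ∀ᵐ q : Fin K → EuclideanSpace ℝ (Fin d), q ∉ D → L1 q = 0 := by
    filter_upwards [haeD] with q hq hqD
    exact hML1zero q fun hc => hq ⟨hc, hqD⟩
  have haeR1 : ∀ᵐ q : Fin K → EuclideanSpace ℝ (Fin d), q ∉ D → R1 q = 0 := by
    filter_upwards [haeD] with q hq hqD
    exact hMR1zero q fun hc => hq ⟨hc, hqD⟩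
  -- product rule
  have prod_rule : ∀ (q : Fin K → EuclideanSpace ℝ (Fin d)) (v : Fin K → EuclideanSpace ℝ (Fin d)), fderiv ℝ F q v
      = M q * fderiv ℝ φ q v + φ q * fderiv ℝ M q v := by
    intro q v
    have h := fderiv_mul (𝕜 := ℝ) (hMd q) (hφd q)
    have h2 : fderiv ℝ F q = M q • fderiv ℝ φ q + φ q • fderiv ℝ M q := h
    rw [h2]
    simp [smul_eq_mul]
  have hsum : ∀ q : Fin K → EuclideanSpace ℝ (Fin d), L1 q - R1 q = ∑ i, fderiv ℝ F q (singStmt4 d K i (Bc (q i))) := by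
    intro q
    simp only [hL1, hR1]
    simp only [prod_rule]
    rw [Finset.sum_add_distrib, ← Finset.mul_sum, ← Finset.mul_sum]
    ring
  -- the divergence integral vanishes
  have hdiv : ∀ i : Fin K, (∫ q : Fin K → EuclideanSpace ℝ (Fin d), fderiv ℝ F q (singStmt4 d K i (Bc (q i)))) = 0 := by
    intro i
    set ℓ : Fin d → ((Fin K → EuclideanSpace ℝ (Fin d)) →L[ℝ] ℝ) := fun j =>
      (EuclideanSpace.proj j).comp (Bc.comp (ContinuousLinearMap.proj i)) with hℓ
    have expand : ∀ q : Fin K → EuclideanSpace ℝ (Fin d), fderiv ℝ F q (singStmt4 d K i (Bc (q i)))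
        = ∑ j, fderiv ℝ F q (singStmt4 d K i (EuclideanSpace.single j 1)) * ℓ j q := by
      intro q
      conv_lhs => rw [eucl_decomp_stmt4 (Bc (q i))]
      rw [map_sum, map_sum]
      refine Finset.sum_congr rfl fun j _ => ?_
      simp only [_root_.map_smul, smul_eq_mul]
      rw [mul_comm]
      rfl
    have hintterm : ∀ j : Fin d, Integrable fun q : Fin K → EuclideanSpace ℝ (Fin d) =>
        fderiv ℝ F q (singStmt4 d K i (EuclideanSpace.single j 1)) * ℓ j q := by
      intro j
      refine Continuous.integrable_of_hasCompactSupport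
        ((hcontfF.clm_apply continuous_const).mul (ℓ j).continuous) ?_
      refine (HasCompactSupport.fderiv (𝕜 := ℝ) hFc).mono fun q hq => ?_
      simp only [Function.mem_support, ne_eq] at hq ⊢
      intro h0
      apply hq
      simp [h0]
    calc (∫ q : Fin K → EuclideanSpace ℝ (Fin d), fderiv ℝ F q (singStmt4 d K i (Bc (q i))))
        = ∫ q : Fin K → EuclideanSpace ℝ (Fin d), ∑ j, fderiv ℝ F q (singStmt4 d K i (EuclideanSpace.single j 1)) * ℓ j q := by
          simp only [expand]
      _ = ∑ j, ∫ q : Fin K → EuclideanSpace ℝ (Fin d), fderiv ℝ F q (singStmt4 d K i (EuclideanSpace.single j 1)) * ℓ j q :=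
          integral_finset_sum _ fun j _ => hintterm j
      _ = ∑ j : Fin d, -(ℓ j (singStmt4 d K i (EuclideanSpace.single j 1))) * ∫ q : Fin K → EuclideanSpace ℝ (Fin d), F q := by
          refine Finset.sum_congr rfl fun j _ => ?_
          exact ibp_aux_stmt4 volume F hF hFc (ℓ j) _
      _ = 0 := by
          rw [← Finset.sum_mul]
          have hval : ∀ j : Fin d, ℓ j (singStmt4 d K i (EuclideanSpace.single j 1))
              = B (EuclideanSpace.single j 1) j := by
            intro j
            simp [hℓ, singStmt4, ContinuousLinearMap.proj, Bc]
          simp only [hval]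
          rw [Finset.sum_neg_distrib, ← trace_eq_stmt4 d B, hB, neg_zero, zero_mul]
  have hzero : (∫ q : Fin K → EuclideanSpace ℝ (Fin d), (L1 q - R1 q)) = 0 := by
    have : (fun q : Fin K → EuclideanSpace ℝ (Fin d) => L1 q - R1 q)
        = fun q : Fin K → EuclideanSpace ℝ (Fin d) => ∑ i, fderiv ℝ F q (singStmt4 d K i (Bc (q i))) := funext hsum
    rw [this, integral_finset_sum]
    · exact Finset.sum_eq_zero fun i _ => hdiv i
    · intro i _
      refine Continuous.integrable_of_hasCompactSupport (hcontfF.clm_apply (hw i)) ?_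
      refine (HasCompactSupport.fderiv (𝕜 := ℝ) hFc).mono fun q hq => ?_
      simp only [Function.mem_support, ne_eq] at hq ⊢
      intro h0
      apply hq
      simp [h0]
  have hint_eq : (∫ q : Fin K → EuclideanSpace ℝ (Fin d), L1 q) = ∫ q : Fin K → EuclideanSpace ℝ (Fin d), R1 q := by
    have := integral_sub hintL1 hintR1
    rw [this] at hzero
    linarith
  -- final assembly
  calc ∫ q in D, M q * ∑ i : Fin K,
        ⟪B (q i), gradient (fun y => φ (Function.update q i y)) (q i)⟫
      = ∫ q in D, L1 q := by rw [stepA]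
    _ = ∫ q : Fin K → EuclideanSpace ℝ (Fin d), L1 q := setIntegral_eq_integral_of_ae_compl_eq_zero haeL1
    _ = ∫ q : Fin K → EuclideanSpace ℝ (Fin d), R1 q := hint_eq
    _ = ∫ q in D, R1 q := (setIntegral_eq_integral_of_ae_compl_eq_zero haeR1).symm
    _ = ∫ q in D, M q * φ q * ∑ i : Fin K,
          u i (‖q i‖ ^ 2 / 2) * ⟪q i, B (q i)⟫ :=
        (setIntegral_congr_fun hDopen.measurableSet stepB).symm
end

section
/- Let 𝓕 : ℝ → ℝ be defined by 𝓕(s) = s·(log s − 1) + 1, where log denotes the natural logarithm with the convention log 0 = 0 (so 𝓕(0) = 1). Let μ be a finite measure on a measurable space X, let L ≥ 1, and let φ : X → ℝ be measurable with φ ≥ 0 almost everywhere and with 𝓕 ∘ φ μ-integrable. Then the function x ↦ 𝓕(max(φ(x) − L, 0)) is μ-integrable and ∫_X 𝓕(max(φ − L, 0)) dμ ≤ μ(X) + ∫_X 𝓕(φ) dμ. -/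
open MeasureTheory

lemma stmt8_Fnn (s : ℝ) (hs : 0 ≤ s) : 0 ≤ s * (Real.log s - 1) + 1 := by
  rcases eq_or_lt_of_le hs with h | h
  · simp [← h]
  · have h1 : Real.log s⁻¹ ≤ s⁻¹ - 1 := Real.log_le_sub_one_of_pos (by positivity)
    rw [Real.log_inv] at h1
    have h2 : s * (-Real.log s) ≤ s * (s⁻¹ - 1) :=
      mul_le_mul_of_nonneg_left h1 hs
    have h3 : s * s⁻¹ = 1 := mul_inv_cancel₀ (ne_of_gt h)
    nlinarith

lemma stmt8_key (L t : ℝ) (hL : 1 ≤ L) (ht : 0 ≤ t) :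
    max (t - L) 0 * (Real.log (max (t - L) 0) - 1) + 1
      ≤ 1 + (t * (Real.log t - 1) + 1) := by
  have hFt := stmt8_Fnn t ht
  rcases le_or_gt t L with h | h
  · rw [max_eq_right (by linarith)]
    simp [Real.log_zero]
    linarith
  · rw [max_eq_left (by linarith)]
    set a := t - L with ha
    have hapos : 0 < a := by simp [ha]; linarith
    rcases le_or_gt a 1 with h1 | h1
    · have hla : Real.log a ≤ 0 := Real.log_nonpos (le_of_lt hapos) h1
      have : a * (Real.log a - 1) ≤ 0 :=
        mul_nonpos_of_nonneg_of_nonpos (le_of_lt hapos) (by linarith)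
      linarith
    · have hat : a ≤ t := by simp [ha]; linarith
      have htpos : 0 < t := lt_of_lt_of_le hapos hat
      have hla : 0 ≤ Real.log a := Real.log_nonneg (le_of_lt h1)
      have hlog : Real.log (a / t) ≤ a / t - 1 := Real.log_le_sub_one_of_pos (by positivity)
      rw [Real.log_div (ne_of_gt hapos) (ne_of_gt htpos)] at hlog
      have h2 : t * (Real.log a - Real.log t) ≤ t * (a / t - 1) :=
        mul_le_mul_of_nonneg_left hlog (le_of_lt htpos)
      have h3 : t * (a / t) = a := by field_simp
      nlinarith [mul_nonneg (sub_nonneg.mpr hat) hla]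

theorem stmt8 {X : Type*} [MeasurableSpace X] (μ : Measure X) [IsFiniteMeasure μ]
    (F : ℝ → ℝ) (hF : ∀ s, F s = s * (Real.log s - 1) + 1)
    (L : ℝ) (hL : 1 ≤ L)
    (φ : X → ℝ) (hφm : Measurable φ) (hφ0 : ∀ᵐ x ∂μ, 0 ≤ φ x)
    (hφint : Integrable (fun x => F (φ x)) μ) :
    Integrable (fun x => F (max (φ x - L) 0)) μ ∧
    ∫ x, F (max (φ x - L) 0) ∂μ ≤ (μ Set.univ).toReal + ∫ x, F (φ x) ∂μ := by
  have hmeas : Measurable (fun x => F (max (φ x - L) 0)) := by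
    simp only [hF]
    exact (((hφm.sub_const L).max measurable_const).mul
      ((Real.measurable_log.comp ((hφm.sub_const L).max measurable_const)).sub
        measurable_const)).add_const 1
  have hgint : Integrable (fun x => 1 + F (φ x)) μ :=
    (integrable_const 1).add hφint
  have hbound : ∀ᵐ x ∂μ, ‖F (max (φ x - L) 0)‖ ≤ 1 + F (φ x) := by
    filter_upwards [hφ0] with x hx
    have hnn : 0 ≤ F (max (φ x - L) 0) := by
      rw [hF]; exact stmt8_Fnn _ (le_max_right _ _)
    rw [Real.norm_eq_abs, abs_of_nonneg hnn, hF, hF]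
    exact stmt8_key L (φ x) hL hx
  have hint : Integrable (fun x => F (max (φ x - L) 0)) μ :=
    Integrable.mono hgint hmeas.aestronglyMeasurable <| by
      filter_upwards [hbound, hφ0] with x hx hx0
      refine hx.trans (le_abs_self _)
  refine ⟨hint, ?_⟩
  have hle : ∫ x, F (max (φ x - L) 0) ∂μ ≤ ∫ x, (1 + F (φ x)) ∂μ := by
    refine integral_mono_ae hint hgint ?_
    filter_upwards [hbound] with x hx
    calc F (max (φ x - L) 0) ≤ ‖F (max (φ x - L) 0)‖ := le_abs_self _
    _ ≤ 1 + F (φ x) := hx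
  rwa [integral_add (integrable_const 1) hφint, integral_const, smul_eq_mul, mul_one] at hle
end

section
/- Let 𝓕 : ℝ → ℝ be defined by 𝓕(s) = s·(log s − 1) + 1, where log denotes the natural logarithm with the convention log 0 = 0 (so 𝓕(0) = 1). Let μ be a finite measure on a measurable space X, let L > 1, and let φ : X → ℝ be measurable with φ ≥ 0 almost everywhere, φ μ-integrable, and 𝓕 ∘ φ μ-integrable. Then ∫_X max(φ − L, 0) dμ ≤ (log L)⁻¹ · ( μ(X) + ∫_X 𝓕(φ) dμ + ∫_X φ dμ ). -/
open MeasureTheory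

lemma stmt9_key (L s : ℝ) (hL : 1 < L) (hs : 0 ≤ s) :
    Real.log L * max (s - L) 0 ≤ s * Real.log s + 2 := by
  have hlogL : 0 < Real.log L := Real.log_pos hL
  have hsl : -1 ≤ s * Real.log s := by
    rcases eq_or_lt_of_le hs with h | h
    · simp [← h]
    · have := Real.log_le_sub_one_of_pos (inv_pos.mpr h)
      rw [Real.log_inv] at this
      nlinarith [mul_le_mul_of_nonneg_left this h.le, mul_inv_cancel₀ h.ne']
  rcases le_or_gt s L with h | h
  · rw [max_eq_right (by linarith)]
    nlinarith
  · rw [max_eq_left (by linarith)]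
    have hls : Real.log L ≤ Real.log s := Real.log_le_log (by linarith) h.le
    nlinarith [mul_le_mul_of_nonneg_right hls (by linarith : (0:ℝ) ≤ s),
      mul_nonneg hlogL.le (by linarith : (0:ℝ) ≤ L)]

theorem stmt9 {X : Type*} [MeasurableSpace X] (μ : Measure X) [IsFiniteMeasure μ]
    (F : ℝ → ℝ) (hF : ∀ s, F s = s * (Real.log s - 1) + 1)
    (L : ℝ) (hL : 1 < L)
    (φ : X → ℝ) (hφm : Measurable φ) (hφ0 : ∀ᵐ x ∂μ, 0 ≤ φ x)
    (hφint : Integrable φ μ)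
    (hφFint : Integrable (fun x => F (φ x)) μ) :
    ∫ x, max (φ x - L) 0 ∂μ ≤
      (Real.log L)⁻¹ * ((μ Set.univ).toReal + ∫ x, F (φ x) ∂μ + ∫ x, φ x ∂μ) := by
  have hlogL : 0 < Real.log L := Real.log_pos hL
  set g : X → ℝ := fun x => (Real.log L)⁻¹ * (1 + F (φ x) + φ x) with hg
  have hgint : Integrable g μ := by
    apply Integrable.const_mul
    exact ((integrable_const 1).add hφFint).add hφint
  have hle : ∀ᵐ x ∂μ, max (φ x - L) 0 ≤ g x := by
    filter_upwards [hφ0] with x hx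
    rw [hg]
    rw [le_inv_mul_iff₀ hlogL]
    have := stmt9_key L (φ x) hL hx
    rw [hF]
    nlinarith
  have h0 : 0 ≤ᵐ[μ] fun x => max (φ x - L) 0 := ae_of_all _ fun x => le_max_right _ _
  calc ∫ x, max (φ x - L) 0 ∂μ ≤ ∫ x, g x ∂μ := integral_mono_of_nonneg h0 hgint hle
    _ = (Real.log L)⁻¹ * ((μ Set.univ).toReal + ∫ x, F (φ x) ∂μ + ∫ x, φ x ∂μ) := by
        rw [hg, integral_const_mul]
        congr 1
        have h1 : Integrable (fun x => 1 + F (φ x)) μ := by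
          exact (integrable_const 1).add hφFint
        rw [integral_add h1 hφint, integral_add (integrable_const 1) hφFint]
        simp [Measure.real]
end

section
/- Let d ≥ 1 and b > 0, and define f : ℝ^d → ℝ by f(q) = −(b/2)·log(1 − |q|²/b). Then for every q with |q| < √b, f is twice continuously differentiable at q, and for every ξ ∈ ℝ^d the Hessian quadratic form of f at q satisfies D²f(q)[ξ, ξ] ≥ (1 − |q|²/b)⁻¹ · |ξ|² ≥ |ξ|². (This is the Bakry–Émery condition Hess(−log M) ≥ Id for the FENE Maxwellian M(q) = Z⁻¹(1 − |q|²/b)^{b/2}, with constant κ = 1.) -/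
theorem stmt10 (d : ℕ) (hd : 1 ≤ d) (b : ℝ) (hb : 0 < b)
    (f : EuclideanSpace ℝ (Fin d) → ℝ)
    (hf : ∀ q, f q = -(b / 2) * Real.log (1 - ‖q‖ ^ 2 / b))
    (q : EuclideanSpace ℝ (Fin d)) (hq : ‖q‖ < Real.sqrt b) :
    ContDiffAt ℝ 2 f q ∧
    ∀ ξ : EuclideanSpace ℝ (Fin d),
      ‖ξ‖ ^ 2 ≤ (1 - ‖q‖ ^ 2 / b)⁻¹ * ‖ξ‖ ^ 2 ∧
      (1 - ‖q‖ ^ 2 / b)⁻¹ * ‖ξ‖ ^ 2 ≤ iteratedFDeriv ℝ 2 f q ![ξ, ξ] := by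
  have hb' : b ≠ 0 := ne_of_gt hb
  have hqb : ‖q‖ ^ 2 < b := by
    have h1 : ‖q‖ ^ 2 < (Real.sqrt b) ^ 2 :=
      pow_lt_pow_left₀ hq (norm_nonneg q) (by norm_num)
    rwa [Real.sq_sqrt hb.le] at h1
  have hpos : ∀ p : EuclideanSpace ℝ (Fin d), ‖p‖ ^ 2 < b → 0 < 1 - ‖p‖ ^ 2 / b :=
    fun p hp => sub_pos.mpr ((div_lt_one hb).mpr hp)
  have hne : (1 : ℝ) - ‖q‖ ^ 2 / b ≠ 0 := (hpos q hqb).ne'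
  -- derivative of f at every point of the open ball
  have hasF : ∀ p : EuclideanSpace ℝ (Fin d), ‖p‖ ^ 2 < b →
      HasFDerivAt f ((1 - ‖p‖ ^ 2 / b)⁻¹ • (innerSL ℝ p)) p := by
    intro p hp
    have hnep : (1 : ℝ) - ‖p‖ ^ 2 / b ≠ 0 := (hpos p hp).ne'
    have h1 : HasDerivAt (fun u : ℝ => 1 - u / b) (-(1 / b)) (‖p‖ ^ 2) := by
      simpa using ((hasDerivAt_id (‖p‖ ^ 2)).div_const b).const_sub 1
    have h2 : HasDerivAt (fun u : ℝ => -(b / 2) * Real.log (1 - u / b))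
        (-(b / 2) * (-(1 / b) / (1 - ‖p‖ ^ 2 / b))) (‖p‖ ^ 2) :=
      (h1.log hnep).const_mul _
    have h3 := h2.comp_hasFDerivAt p (hasStrictFDerivAt_norm_sq p).hasFDerivAt
    have hfe : f = fun p : EuclideanSpace ℝ (Fin d) =>
        -(b / 2) * Real.log (1 - ‖p‖ ^ 2 / b) := funext hf
    rw [hfe]
    have hbp : b - ‖p‖ ^ 2 ≠ 0 := (sub_pos.mpr hp).ne'
    refine h3.congr_fderiv ?_
    ext ξ
    simp only [ContinuousLinearMap.smul_apply, smul_eq_mul, two_smul,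
      ContinuousLinearMap.add_apply]
    field_simp
    ring
  have hcd : ContDiffAt ℝ 2 f q := by
    have hfe : f = fun p : EuclideanSpace ℝ (Fin d) =>
        -(b / 2) * Real.log (1 - ‖p‖ ^ 2 / b) := funext hf
    rw [hfe]
    have hin : ContDiffAt ℝ 2 (fun p : EuclideanSpace ℝ (Fin d) => 1 - ‖p‖ ^ 2 / b) q :=
      contDiffAt_const.sub ((contDiff_norm_sq ℝ).contDiffAt.div_const b)
    exact contDiffAt_const.mul ((Real.contDiffAt_log.mpr hne).comp (g := Real.log) q hin)
  refine ⟨hcd, fun ξ => ?_⟩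
  have ha1 : (1 : ℝ) ≤ (1 - ‖q‖ ^ 2 / b)⁻¹ := by
    have h0 := hpos q hqb
    have h2 : (1 : ℝ) - ‖q‖ ^ 2 / b ≤ 1 := by
      have : 0 ≤ ‖q‖ ^ 2 / b := div_nonneg (sq_nonneg _) hb.le
      linarith
    nlinarith [mul_inv_cancel₀ hne, inv_pos.mpr h0]
  constructor
  · nlinarith [sq_nonneg ‖ξ‖]
  · -- second derivative computation
    have hset : IsOpen {p : EuclideanSpace ℝ (Fin d) | ‖p‖ ^ 2 < b} :=
      isOpen_lt (by fun_prop) continuous_const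
    have hmem : {p : EuclideanSpace ℝ (Fin d) | ‖p‖ ^ 2 < b} ∈ nhds q := hset.mem_nhds hqb
    have hEq : (fun p : EuclideanSpace ℝ (Fin d) => fderiv ℝ f p ξ) =ᶠ[nhds q]
        (fun p : EuclideanSpace ℝ (Fin d) => (1 - ‖p‖ ^ 2 / b)⁻¹ * (innerSL ℝ ξ) p) := by
      filter_upwards [hmem] with p hp
      rw [(hasF p hp).fderiv]
      simp only [ContinuousLinearMap.smul_apply, innerSL_apply_apply, smul_eq_mul]
      rw [real_inner_comm]
    -- derivative of the coefficient
    have h1 : HasDerivAt (fun u : ℝ => 1 - u / b) (-(1 / b)) (‖q‖ ^ 2) := by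
      simpa using ((hasDerivAt_id (‖q‖ ^ 2)).div_const b).const_sub 1
    have h2 : HasDerivAt (fun u : ℝ => (1 - u / b)⁻¹)
        (-(-(1 / b)) / (1 - ‖q‖ ^ 2 / b) ^ 2) (‖q‖ ^ 2) := h1.inv hne
    have ha : HasFDerivAt (fun p : EuclideanSpace ℝ (Fin d) => (1 - ‖p‖ ^ 2 / b)⁻¹)
        ((-(-(1 / b)) / (1 - ‖q‖ ^ 2 / b) ^ 2) • (2 • innerSL ℝ q)) q :=
      h2.comp_hasFDerivAt (f := fun p : EuclideanSpace ℝ (Fin d) => ‖p‖ ^ 2) q (hasStrictFDerivAt_norm_sq q).hasFDerivAt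
    have hmul : HasFDerivAt (fun p : EuclideanSpace ℝ (Fin d) => (1 - ‖p‖ ^ 2 / b)⁻¹ * (innerSL ℝ ξ) p) _ q := ha.mul (innerSL ℝ ξ).hasFDerivAt
    have hdiff : DifferentiableAt ℝ (fderiv ℝ f) q :=
      (hcd.fderiv_right (le_refl 2)).differentiableAt one_ne_zero
    have h3 : iteratedFDeriv ℝ 2 f q ![ξ, ξ] =
        fderiv ℝ (fun p : EuclideanSpace ℝ (Fin d) => fderiv ℝ f p ξ) q ξ := by
      rw [iteratedFDeriv_two_apply, fderiv_clm_apply hdiff (differentiableAt_const ξ)]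
      simp
    rw [h3, hEq.fderiv_eq, hmul.fderiv]
    simp only [ContinuousLinearMap.add_apply, ContinuousLinearMap.smul_apply,
      smul_eq_mul, two_smul, innerSL_apply_apply]
    have hip : (inner ℝ ξ ξ : ℝ) = ‖ξ‖ ^ 2 := real_inner_self_eq_norm_sq ξ
    have hcomm : (inner ℝ ξ q : ℝ) = inner ℝ q ξ := real_inner_comm q ξ
    rw [hip, hcomm]
    have hc : (0:ℝ) ≤ - -(1 / b) / (1 - ‖q‖ ^ 2 / b) ^ 2 := by
      rw [neg_neg]; positivity
    nlinarith [mul_nonneg hc (sq_nonneg (inner ℝ q ξ : ℝ))]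
end

section
/- Let d ≥ 1, K ≥ 1 and b₁, …, b_K > 0, and define f : (ℝ^d)^K → ℝ by f(q₁, …, q_K) = Σ_{i=1}^K (−(bᵢ/2)·log(1 − |qᵢ|²/bᵢ)). Then for every q = (q₁, …, q_K) with |qᵢ| < √bᵢ for each i, f is twice continuously differentiable at q, and for every ξ = (ξ₁, …, ξ_K) ∈ (ℝ^d)^K the Hessian quadratic form of f at q satisfies D²f(q)[ξ, ξ] ≥ Σ_{i=1}^K |ξᵢ|². (This says Hess(−log M(q)) ≥ Id on D = ∏ᵢ B(0, √bᵢ) for the K-spring FENE Maxwellian M(q) = ∏ᵢ Mᵢ(qᵢ), i.e. the Bakry–Émery condition holds with κ = 1.) -/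
open Real ContinuousLinearMap

set_option maxHeartbeats 1000000 in
theorem stmt11 (d K : ℕ) (hd : 1 ≤ d) (hK : 1 ≤ K)
    (bv : Fin K → ℝ) (hbv : ∀ i, 0 < bv i)
    (f : (Fin K → EuclideanSpace ℝ (Fin d)) → ℝ)
    (hf : ∀ q, f q = ∑ i : Fin K, -(bv i / 2) * Real.log (1 - ‖q i‖ ^ 2 / bv i))
    (q : Fin K → EuclideanSpace ℝ (Fin d)) (hq : ∀ i, ‖q i‖ < Real.sqrt (bv i)) :
    ContDiffAt ℝ 2 f q ∧
    ∀ ξ : Fin K → EuclideanSpace ℝ (Fin d),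
      ∑ i : Fin K, ‖ξ i‖ ^ 2 ≤ iteratedFDeriv ℝ 2 f q ![ξ, ξ] := by
  have hfe : f = fun p => ∑ i : Fin K, -(bv i / 2) * Real.log (1 - ‖p i‖ ^ 2 / bv i) :=
    funext hf
  subst hfe
  have hb0 : ∀ i, bv i ≠ 0 := fun i => (hbv i).ne'
  set U : Set (Fin K → EuclideanSpace ℝ (Fin d)) := {p | ∀ i, ‖p i‖ ^ 2 < bv i} with hU
  have hUo : IsOpen U := by
    have : U = ⋂ i : Fin K, {p : Fin K → EuclideanSpace ℝ (Fin d) | ‖p i‖ ^ 2 < bv i} := by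
      ext p; simp [hU, Set.mem_iInter]
    rw [this]
    exact isOpen_iInter_of_finite fun i =>
      isOpen_lt (((continuous_apply i).norm).pow 2) continuous_const
  have hqU : q ∈ U := by
    intro i
    have h := hq i
    have h2 : Real.sqrt (bv i) ^ 2 = bv i := Real.sq_sqrt (hbv i).le
    nlinarith [norm_nonneg (q i), Real.sqrt_nonneg (bv i)]
  have hcpos : ∀ p ∈ U, ∀ i, 0 < 1 - ‖p i‖ ^ 2 / bv i := by
    intro p hp i
    have := hp i
    have h2 : ‖p i‖ ^ 2 / bv i < 1 := (div_lt_one (hbv i)).2 this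
    linarith
  set D : (Fin K → EuclideanSpace ℝ (Fin d)) → ((Fin K → EuclideanSpace ℝ (Fin d)) →L[ℝ] ℝ) := fun p =>
    ∑ i : Fin K, (1 - ‖p i‖ ^ 2 / bv i)⁻¹ •
      ((innerSL ℝ (p i)).comp (ContinuousLinearMap.proj i)) with hD
  have hnormsq : ∀ (i : Fin K) (p : Fin K → EuclideanSpace ℝ (Fin d)),
      HasFDerivAt (fun p : Fin K → EuclideanSpace ℝ (Fin d) => ‖p i‖ ^ 2)
      (2 • ((innerSL ℝ (p i)).comp (ContinuousLinearMap.proj i))) p := fun i p =>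
    (ContinuousLinearMap.proj i : (Fin K → EuclideanSpace ℝ (Fin d)) →L[ℝ] EuclideanSpace ℝ (Fin d)).hasFDerivAt.norm_sq
  have hc' : ∀ (i : Fin K) (p : Fin K → EuclideanSpace ℝ (Fin d)),
      HasFDerivAt (fun p : Fin K → EuclideanSpace ℝ (Fin d) => 1 - ‖p i‖ ^ 2 / bv i)
      ((0 : (Fin K → EuclideanSpace ℝ (Fin d)) →L[ℝ] ℝ) -
        (bv i)⁻¹ • (2 • ((innerSL ℝ (p i)).comp (ContinuousLinearMap.proj i)))) p := by
    intro i p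
    simpa only [smul_eq_mul, div_eq_inv_mul] using
      (hasFDerivAt_const (1 : ℝ) p).fun_sub ((hnormsq i p).fun_const_smul ((bv i)⁻¹))
  have hDf : ∀ p ∈ U, HasFDerivAt (fun p : Fin K → EuclideanSpace ℝ (Fin d) => ∑ i : Fin K,
      -(bv i / 2) * Real.log (1 - ‖p i‖ ^ 2 / bv i)) (D p) p := by
    intro p hp
    rw [hD]
    refine HasFDerivAt.fun_sum fun i _ => ?_
    have hcne : (1 - ‖p i‖ ^ 2 / bv i) ≠ 0 := (hcpos p hp i).ne'
    have h3 := ((hc' i p).log hcne).const_mul (-(bv i / 2))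
    convert h3 using 1
    · rfl
    ext v
    simp only [ContinuousLinearMap.smul_apply, ContinuousLinearMap.sub_apply,
      ContinuousLinearMap.zero_apply, smul_eq_mul, ContinuousLinearMap.coe_smul',
      Pi.smul_apply, nsmul_eq_mul, Nat.cast_ofNat]
    have key : ∀ (c a S : ℝ), a ≠ 0 → c⁻¹ * S = -(a/2) * (c⁻¹ * (0 - a⁻¹ * (2 * S))) := by
      intro c a S ha
      rw [show -(a/2) * (c⁻¹ * (0 - a⁻¹ * (2 * S))) = c⁻¹ * ((a * a⁻¹) * S) by ring,
        mul_inv_cancel₀ ha, one_mul]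
    exact key _ _ _ (hb0 i)
  -- smoothness
  have hsmooth : ContDiffAt ℝ 2 (fun p : Fin K → EuclideanSpace ℝ (Fin d) =>
      ∑ i : Fin K, -(bv i / 2) * Real.log (1 - ‖p i‖ ^ 2 / bv i)) q := by
    refine ContDiffAt.sum fun i _ => ?_
    have h1 : ContDiff ℝ 2 (fun p : Fin K → EuclideanSpace ℝ (Fin d) => ‖p i‖ ^ 2) :=
      (contDiff_norm_sq ℝ).comp (contDiff_apply ℝ (EuclideanSpace ℝ (Fin d)) i)
    have h2 : ContDiff ℝ 2 (fun p : Fin K → EuclideanSpace ℝ (Fin d) => 1 - ‖p i‖ ^ 2 / bv i) :=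
      contDiff_const.sub (h1.div_const _)
    have h3 : ContDiffAt ℝ 2 (fun p : Fin K → EuclideanSpace ℝ (Fin d) =>
        Real.log (1 - ‖p i‖ ^ 2 / bv i)) q := h2.contDiffAt.log (hcpos q hqU i).ne'
    exact contDiffAt_const.mul h3
  refine ⟨hsmooth, fun ξ => ?_⟩
  have hdiff : DifferentiableAt ℝ (fderiv ℝ (fun p : Fin K → EuclideanSpace ℝ (Fin d) =>
      ∑ i : Fin K, -(bv i / 2) * Real.log (1 - ‖p i‖ ^ 2 / bv i))) q :=
    (hsmooth.fderiv_right (m := 1) (by norm_num)).differentiableAt one_ne_zero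
  have h1 : iteratedFDeriv ℝ 2 (fun p : Fin K → EuclideanSpace ℝ (Fin d) =>
        ∑ i : Fin K, -(bv i / 2) * Real.log (1 - ‖p i‖ ^ 2 / bv i)) q ![ξ, ξ] =
      fderiv ℝ (fun p => fderiv ℝ (fun p : Fin K → EuclideanSpace ℝ (Fin d) =>
        ∑ i : Fin K, -(bv i / 2) * Real.log (1 - ‖p i‖ ^ 2 / bv i)) p ξ) q ξ := by
    rw [iteratedFDeriv_two_apply, fderiv_clm_apply hdiff (differentiableAt_const ξ)]
    simp
  rw [h1]
  have h2 : (fun p => fderiv ℝ (fun p : Fin K → EuclideanSpace ℝ (Fin d) =>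
        ∑ i : Fin K, -(bv i / 2) * Real.log (1 - ‖p i‖ ^ 2 / bv i)) p ξ) =ᶠ[nhds q]
      (fun p => ∑ i : Fin K, (1 - ‖p i‖ ^ 2 / bv i)⁻¹ * (inner ℝ (p i) (ξ i) : ℝ)) := by
    filter_upwards [hUo.mem_nhds hqU] with p hp
    rw [(hDf p hp).fderiv, hD]
    simp
  rw [h2.fderiv_eq]
  have hα : ∀ i, HasFDerivAt (fun p : Fin K → EuclideanSpace ℝ (Fin d) =>
      (1 - ‖p i‖ ^ 2 / bv i)⁻¹)
      ((-(((1 - ‖q i‖ ^ 2 / bv i)) ^ 2)⁻¹) • ((0 : (Fin K → EuclideanSpace ℝ (Fin d)) →L[ℝ] ℝ) -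
        (bv i)⁻¹ • (2 • ((innerSL ℝ (q i)).comp (ContinuousLinearMap.proj i))))) q :=
    fun i => (hasDerivAt_inv (hcpos q hqU i).ne').comp_hasFDerivAt q (hc' i q)
  have hinner : ∀ i, HasFDerivAt (fun p : Fin K → EuclideanSpace ℝ (Fin d) =>
      (inner ℝ (p i) (ξ i) : ℝ))
      ((innerSL ℝ (ξ i)).comp (ContinuousLinearMap.proj i)) q := by
    intro i
    have h := ((innerSL ℝ (ξ i)).comp (ContinuousLinearMap.proj i :
      (Fin K → EuclideanSpace ℝ (Fin d)) →L[ℝ] EuclideanSpace ℝ (Fin d))).hasFDerivAt (x := q)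
    refine h.congr_of_eventuallyEq ?_
    filter_upwards with p
    exact real_inner_comm _ _
  have htot := HasFDerivAt.fun_sum (u := Finset.univ) (fun i _ => (hα i).fun_mul (hinner i))
  rw [htot.fderiv, ContinuousLinearMap.sum_apply]
  refine Finset.sum_le_sum fun i _ => ?_
  simp only [ContinuousLinearMap.add_apply, ContinuousLinearMap.smul_apply, smul_eq_mul,
    ContinuousLinearMap.comp_apply, ContinuousLinearMap.proj_apply, innerSL_apply_apply,
    ContinuousLinearMap.sub_apply, ContinuousLinearMap.zero_apply, nsmul_eq_mul, Nat.cast_ofNat,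
    ContinuousLinearMap.coe_smul', Pi.smul_apply, real_inner_self_eq_norm_sq]
  set c := 1 - ‖q i‖ ^ 2 / bv i with hcdef
  set s : ℝ := inner ℝ (q i) (ξ i) with hsdef
  have hc0 : 0 < c := hcpos q hqU i
  have hcle : c ≤ 1 := by
    have h1 : 0 ≤ ‖q i‖ ^ 2 / bv i := div_nonneg (sq_nonneg _) (hbv i).le
    rw [hcdef]; linarith
  have hinv : 1 ≤ c⁻¹ := (one_le_inv_iff₀).2 ⟨hc0, hcle⟩
  have h2nd : (0:ℝ) ≤ s * (-(c ^ 2)⁻¹ * (0 - (bv i)⁻¹ * (2 * s))) := by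
    have : s * (-(c ^ 2)⁻¹ * (0 - (bv i)⁻¹ * (2 * s))) = 2 * s ^ 2 * ((bv i)⁻¹ * (c ^ 2)⁻¹) := by
      ring
    rw [this]
    exact mul_nonneg (by positivity) (mul_nonneg (inv_nonneg.2 (hbv i).le)
      (inv_nonneg.2 (sq_nonneg c)))
  nlinarith [sq_nonneg ‖ξ i‖, mul_le_mul_of_nonneg_right hinv (sq_nonneg ‖ξ i‖)]
end
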